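/- Let Ψ : ℕ → [0,∞) satisfy Ψ(n) ≤ c·n·(n−1)/2 for a constant c > 0, and let θ' > θ. Then for any k with |k(n)| ≤ ‖k‖·e^{θn}, and any t, t' ≥ 0, one has sup_n e^{−θ'n}|e^{−Ψ(n)t}k(n) − e^{−Ψ(n)t'}k(n)| ≤ |t−t'|·(2c/((θ'−θ)²e²))·‖k‖. -/
import Mathlib

lemma aux_xexp (x : ℝ) : x * Real.exp (-x) ≤ (Real.exp 1)⁻¹ := by
  have h := Real.add_one_le_exp (x - 1)
  have hx : x ≤ Real.exp (x - 1) := by linarith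
  calc x * Real.exp (-x) ≤ Real.exp (x - 1) * Real.exp (-x) :=
        mul_le_mul_of_nonneg_right hx (Real.exp_pos _).le
    _ = Real.exp (-1) := by rw [← Real.exp_add]; ring_nf
    _ = (Real.exp 1)⁻¹ := by rw [← Real.exp_neg]

lemma aux_key (δ : ℝ) (hδ : 0 < δ) (n : ℕ) :
    (n : ℝ) * ((n : ℝ) - 1) * Real.exp (-(δ * n)) ≤ 4 / (δ ^ 2 * Real.exp 1 ^ 2) := by
  have hx := aux_xexp (δ * n / 2)
  have hn : (0 : ℝ) ≤ n := Nat.cast_nonneg n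
  have he : (0 : ℝ) < Real.exp 1 := Real.exp_pos 1
  set E := Real.exp (-(δ * n / 2)) with hE
  have hEpos : 0 < E := Real.exp_pos _
  have hsq : Real.exp (-(δ * n)) = E ^ 2 := by
    rw [hE, pow_two, ← Real.exp_add]; ring_nf
  rw [hsq, le_div_iff₀ (by positivity)]
  have h2 : δ * n * E ≤ 2 * (Real.exp 1)⁻¹ := by nlinarith [hx]
  have h3 : 0 ≤ δ * n * E := by positivity
  have h4 : (δ * n * E) * (δ * n * E) ≤ (2 * (Real.exp 1)⁻¹) * (2 * (Real.exp 1)⁻¹) :=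
    mul_le_mul h2 h2 h3 (by positivity)
  have hinv : Real.exp 1 * (Real.exp 1)⁻¹ = 1 := mul_inv_cancel₀ he.ne'
  have h5 : ((Real.exp 1)⁻¹) ^ 2 * Real.exp 1 ^ 2 = 1 := by field_simp
  nlinarith [mul_le_mul_of_nonneg_right h4 (by positivity : (0:ℝ) ≤ Real.exp 1 ^ 2), h5,
    mul_nonneg hn (by positivity : (0:ℝ) ≤ E ^ 2 * δ ^ 2 * Real.exp 1 ^ 2)]

lemma aux_lip (a t t' : ℝ) (ha : 0 ≤ a) (ht : 0 ≤ t) (ht' : 0 ≤ t') :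
    |Real.exp (-(a * t)) - Real.exp (-(a * t'))| ≤ a * |t - t'| := by
  wlog h : t' ≤ t with H
  · have := H a t' t ha ht' ht (le_of_not_ge h)
    rw [abs_sub_comm t t', abs_sub_comm (Real.exp (-(a * t)))]
    exact this
  have h1 : Real.exp (-(a * t)) ≤ Real.exp (-(a * t')) := by
    apply Real.exp_le_exp.mpr; nlinarith
  rw [abs_sub_comm, abs_of_nonneg (by linarith), abs_of_nonneg (by linarith : (0:ℝ) ≤ t - t')]
  have h2 : Real.exp (-(a * t')) ≤ 1 := Real.exp_le_one_iff.mpr (by nlinarith)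
  have h3 : -(a * (t - t')) + 1 ≤ Real.exp (-(a * (t - t'))) := Real.add_one_le_exp _
  have h4 : Real.exp (-(a * t)) = Real.exp (-(a * t')) * Real.exp (-(a * (t - t'))) := by
    rw [← Real.exp_add]; ring_nf
  nlinarith [Real.exp_pos (-(a * (t - t'))), Real.exp_pos (-(a * t'))]

theorem mult_semigroup_lipschitz (c θ θ' K : ℝ) (hc : 0 < c) (hθ : θ < θ')
    (Ψ : ℕ → ℝ) (hΨ0 : ∀ n, 0 ≤ Ψ n) (hΨ : ∀ n : ℕ, Ψ n ≤ c * n * ((n : ℝ) - 1) / 2)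
    (k : ℕ → ℝ) (hk : ∀ n : ℕ, |k n| ≤ K * Real.exp (θ * n))
    (t t' : ℝ) (ht : 0 ≤ t) (ht' : 0 ≤ t') :
    ∀ n : ℕ, Real.exp (-(θ' * n)) *
        |Real.exp (-(Ψ n * t)) * k n - Real.exp (-(Ψ n * t')) * k n| ≤
      |t - t'| * (2 * c / ((θ' - θ) ^ 2 * Real.exp 1 ^ 2)) * K := by
  intro n
  have hK : 0 ≤ K := by
    have := hk 0
    simp at this
    exact (abs_nonneg _).trans this
  have hδ : 0 < θ' - θ := by linarith
  have hn : (0 : ℝ) ≤ n := Nat.cast_nonneg n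
  have he : (0 : ℝ) < Real.exp 1 := Real.exp_pos 1
  have hfac : |Real.exp (-(Ψ n * t)) * k n - Real.exp (-(Ψ n * t')) * k n|
      = |Real.exp (-(Ψ n * t)) - Real.exp (-(Ψ n * t'))| * |k n| := by
    rw [← abs_mul]; ring_nf
  have hlip := aux_lip (Ψ n) t t' (hΨ0 n) ht ht'
  have hkn := hk n
  have e1 : Real.exp (-(θ' * n)) *
      |Real.exp (-(Ψ n * t)) * k n - Real.exp (-(Ψ n * t')) * k n|
      ≤ Real.exp (-(θ' * n)) * ((Ψ n * |t - t'|) * (K * Real.exp (θ * n))) := by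
    rw [hfac]
    apply mul_le_mul_of_nonneg_left _ (Real.exp_pos _).le
    exact mul_le_mul hlip hkn (abs_nonneg _) (mul_nonneg (hΨ0 n) (abs_nonneg _))
  refine e1.trans ?_
  have hkey := aux_key (θ' - θ) hδ n
  have hΨn := hΨ n
  have hexp : Real.exp (-(θ' * n)) * Real.exp (θ * n) = Real.exp (-((θ' - θ) * n)) := by
    rw [← Real.exp_add]; ring_nf
  have e2 : Real.exp (-(θ' * n)) * ((Ψ n * |t - t'|) * (K * Real.exp (θ * n)))
      = |t - t'| * (Ψ n * Real.exp (-((θ' - θ) * n))) * K := by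
    rw [← hexp]; ring
  rw [e2]
  apply mul_le_mul_of_nonneg_right _ hK
  apply mul_le_mul_of_nonneg_left _ (abs_nonneg _)
  have e3 : Ψ n * Real.exp (-((θ' - θ) * n)) ≤
      c * n * ((n : ℝ) - 1) / 2 * Real.exp (-((θ' - θ) * n)) :=
    mul_le_mul_of_nonneg_right hΨn (Real.exp_pos _).le
  refine e3.trans ?_
  have e4 : c * n * ((n : ℝ) - 1) / 2 * Real.exp (-((θ' - θ) * n))
      = (c / 2) * ((n : ℝ) * ((n : ℝ) - 1) * Real.exp (-((θ' - θ) * n))) := by ring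
  rw [e4]
  have e5 : (c / 2) * ((n : ℝ) * ((n : ℝ) - 1) * Real.exp (-((θ' - θ) * n)))
      ≤ (c / 2) * (4 / ((θ' - θ) ^ 2 * Real.exp 1 ^ 2)) :=
    mul_le_mul_of_nonneg_left hkey (by positivity)
  refine e5.trans (le_of_eq ?_)
  ring
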